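/- Let a ∈ Δ_n^*, b ∈ Δ_m^*, g ∈ Δ_r^*, C ∈ ℝ^{n×m} and ε ≥ 0. Set L_ε := sqrt( 2( ‖C‖₂² ‖Diag(1/g)‖₂² + ε² ) ), where ‖·‖₂ denotes the spectral norm. Then for all (Q₁,R₁), (Q₂,R₂) ∈ Π_{a,g} × Π_{b,g} with strictly positive entries, ‖∇f_ε(Q₁,R₁) − ∇f_ε(Q₂,R₂)‖₂ ≤ L_ε ‖(log Q₁ − log Q₂, log R₁ − log R₂)‖₂, where ∇f_ε(Q,R) = ( C R Diag(1/g) + ε log Q, Cᵀ Q Diag(1/g) + ε log R ), logarithms are entrywise, and the norm on pairs is the Euclidean norm of the concatenation (Frobenius norm on each block). -/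

import Mathlib

open Matrix Finset Real
open scoped RealInnerProductSpace

noncomputable section

/-- Real matrices indexed by `Fin n × Fin m`. -/
abbrev Mat (n m : ℕ) : Type := Matrix (Fin n) (Fin m) ℝ

/-- Triples `(Q, R, g)` as in the low-rank OT factorization. -/
abbrev LRTriple (n m r : ℕ) : Type := Mat n r × Mat m r × (Fin r → ℝ)

/-- Pairs `(Q, R)` (fixed middle marginal `g`). -/
abbrev LRPair (n m r : ℕ) : Type := Mat n r × Mat m r

/-- The interior of the probability simplex Δ_n^*: strictly positive entries summing to 1. -/
def posSimplex (n : ℕ) : Set (Fin n → ℝ) := {a | (∀ i, 0 < a i) ∧ ∑ i, a i = 1}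

/-- Frobenius inner product ⟨C, P⟩ = Σ_{ij} C_ij P_ij. -/
def frobInner {n m : ℕ} (C P : Mat n m) : ℝ := ∑ i, ∑ j, C i j * P i j

/-- Entropy H(P) = −Σ_{ij} P_ij (log P_ij − 1) (with 0 log 0 = 0, as `Real.log 0 = 0`). -/
def matH {n m : ℕ} (P : Mat n m) : ℝ := -∑ i, ∑ j, P i j * (Real.log (P i j) - 1)

/-- Entropy of a vector. -/
def vecH {r : ℕ} (g : Fin r → ℝ) : ℝ := -∑ i, g i * (Real.log (g i) - 1)

/-- Kullback–Leibler divergence KL(P,Q) = Σ_{ij} P_ij (log(P_ij/Q_ij) − 1). -/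
def matKL {n m : ℕ} (P Q : Mat n m) : ℝ := ∑ i, ∑ j, P i j * (Real.log (P i j / Q i j) - 1)

/-- Kullback–Leibler divergence of vectors. -/
def vecKL {r : ℕ} (p q : Fin r → ℝ) : ℝ := ∑ i, p i * (Real.log (p i / q i) - 1)

/-- KL divergence on triples, summing over the three components. -/
def tripleKL {n m r : ℕ} (x y : LRTriple n m r) : ℝ :=
  matKL x.1 y.1 + matKL x.2.1 y.2.1 + vecKL x.2.2 y.2.2

/-- KL divergence on pairs, summing over the two components. -/
def pairKL {n m r : ℕ} (x y : LRPair n m r) : ℝ := matKL x.1 y.1 + matKL x.2 y.2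

/-- Euclidean inner product on triples. -/
def tripleInner {n m r : ℕ} (x y : LRTriple n m r) : ℝ :=
  frobInner x.1 y.1 + frobInner x.2.1 y.2.1 + ∑ i, x.2.2 i * y.2.2 i

/-- Euclidean inner product on pairs. -/
def pairInner {n m r : ℕ} (x y : LRPair n m r) : ℝ := frobInner x.1 y.1 + frobInner x.2 y.2

/-- Squared Euclidean norm of a triple (Frobenius on matrix blocks). -/
def tripleNormSq {n m r : ℕ} (x : LRTriple n m r) : ℝ :=
  (∑ i, ∑ j, (x.1 i j) ^ 2) + (∑ i, ∑ j, (x.2.1 i j) ^ 2) + ∑ i, (x.2.2 i) ^ 2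

/-- Squared Euclidean norm of a pair (Frobenius on matrix blocks). -/
def pairNormSq {n m r : ℕ} (x : LRPair n m r) : ℝ :=
  (∑ i, ∑ j, (x.1 i j) ^ 2) + (∑ i, ∑ j, (x.2 i j) ^ 2)

/-- The transport polytope Π_{a,b} of couplings with marginals `a` and `b`. -/
def couplings {n m : ℕ} (a : Fin n → ℝ) (b : Fin m → ℝ) : Set (Mat n m) :=
  {P | (∀ i j, 0 ≤ P i j) ∧ (∀ i, ∑ j, P i j = a i) ∧ (∀ j, ∑ i, P i j = b j)}

/-- The nonnegative rank: smallest `q` such that `M` is a sum of `q` nonnegative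
rank-one matrices. -/
def nonnegRank {n m : ℕ} (M : Mat n m) : ℕ :=
  sInf {q : ℕ | ∃ f : Fin q → Mat n m,
    (∀ i, (f i).rank = 1 ∧ ∀ k l, 0 ≤ f i k l) ∧ M = ∑ i, f i}

/-- Π_{a,b}(r): couplings with nonnegative rank at most `r`. -/
def couplingsRank {n m : ℕ} (a : Fin n → ℝ) (b : Fin m → ℝ) (r : ℕ) : Set (Mat n m) :=
  {P | P ∈ couplings a b ∧ nonnegRank P ≤ r}

/-- 𝒞₁(a,b,r): `Q, R` nonnegative with row sums `a`, `b`, and `g > 0`. -/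
def C1set {n m : ℕ} (a : Fin n → ℝ) (b : Fin m → ℝ) (r : ℕ) : Set (LRTriple n m r) :=
  {x | (∀ i j, 0 ≤ x.1 i j) ∧ (∀ i j, 0 ≤ x.2.1 i j) ∧ (∀ i, 0 < x.2.2 i) ∧
    (∀ i, ∑ j, x.1 i j = a i) ∧ (∀ i, ∑ j, x.2.1 i j = b i)}

/-- The closure of 𝒞₁(a,b,r): as 𝒞₁ but only `g ≥ 0`. -/
def C1barSet {n m : ℕ} (a : Fin n → ℝ) (b : Fin m → ℝ) (r : ℕ) : Set (LRTriple n m r) :=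
  {x | (∀ i j, 0 ≤ x.1 i j) ∧ (∀ i j, 0 ≤ x.2.1 i j) ∧ (∀ i, 0 ≤ x.2.2 i) ∧
    (∀ i, ∑ j, x.1 i j = a i) ∧ (∀ i, ∑ j, x.2.1 i j = b i)}

/-- 𝒞₁(a,b,r,α): as 𝒞₁ but with the lower bound `g ≥ α`. -/
def C1setAlpha {n m : ℕ} (a : Fin n → ℝ) (b : Fin m → ℝ) (r : ℕ) (α : ℝ) :
    Set (LRTriple n m r) :=
  {x | (∀ i j, 0 ≤ x.1 i j) ∧ (∀ i j, 0 ≤ x.2.1 i j) ∧ (∀ i, α ≤ x.2.2 i) ∧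
    (∀ i, ∑ j, x.1 i j = a i) ∧ (∀ i, ∑ j, x.2.1 i j = b i)}

/-- 𝒞₂(r): `Q, R, g` nonnegative with both column sums equal to `g`. -/
def C2set {n m : ℕ} (r : ℕ) : Set (LRTriple n m r) :=
  {x | (∀ i j, 0 ≤ x.1 i j) ∧ (∀ i j, 0 ≤ x.2.1 i j) ∧ (∀ i, 0 ≤ x.2.2 i) ∧
    (∀ j, ∑ i, x.1 i j = x.2.2 j) ∧ (∀ j, ∑ i, x.2.1 i j = x.2.2 j)}

/-- 𝒞(a,b,r) = 𝒞₁(a,b,r) ∩ 𝒞₂(r). -/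
def Cset {n m : ℕ} (a : Fin n → ℝ) (b : Fin m → ℝ) (r : ℕ) : Set (LRTriple n m r) :=
  C1set a b r ∩ C2set r

/-- 𝒞(a,b,r,α) = 𝒞₁(a,b,r,α) ∩ 𝒞₂(r). -/
def CsetAlpha {n m : ℕ} (a : Fin n → ℝ) (b : Fin m → ℝ) (r : ℕ) (α : ℝ) :
    Set (LRTriple n m r) :=
  C1setAlpha a b r α ∩ C2set r

/-- F_ε(Q,R,g) = ⟨C, Q Diag(1/g) Rᵀ⟩ − ε H((Q,R,g)). -/
def Fobj {n m r : ℕ} (C : Mat n m) (ε : ℝ) (x : LRTriple n m r) : ℝ :=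
  frobInner C (x.1 * Matrix.diagonal (fun i => (x.2.2 i)⁻¹) * x.2.1ᵀ) -
    ε * (matH x.1 + matH x.2.1 + vecH x.2.2)

/-- LOT_{r,ε} = inf of F_ε over 𝒞(a,b,r). -/
def LOTre {n m : ℕ} (a : Fin n → ℝ) (b : Fin m → ℝ) (C : Mat n m) (ε : ℝ) (r : ℕ) : ℝ :=
  sInf (Fobj C ε '' Cset a b r)

/-- LOT_{r,ε,α} = inf of F_ε over 𝒞(a,b,r,α). -/
def LOTreAlpha {n m : ℕ} (a : Fin n → ℝ) (b : Fin m → ℝ) (C : Mat n m) (ε : ℝ) (r : ℕ)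
    (α : ℝ) : ℝ :=
  sInf (Fobj C ε '' CsetAlpha a b r α)

/-- Spectral norm (ℓ²→ℓ² operator norm) of a matrix. -/
def specNorm {n m : ℕ} (C : Mat n m) : ℝ :=
  ‖LinearMap.toContinuousLinearMap (Matrix.toEuclideanLin C)‖

/-- The gradient ∇F_ε(Q,R,g) =
(C R Diag(1/g) + ε log Q, Cᵀ Q Diag(1/g) + ε log R, −𝒟(Qᵀ C R)/g² + ε log g). -/
def gradF {n m r : ℕ} (C : Mat n m) (ε : ℝ) (x : LRTriple n m r) : LRTriple n m r :=
  (Matrix.of fun i k => (C * x.2.1) i k * (x.2.2 k)⁻¹ + ε * Real.log (x.1 i k),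
   Matrix.of fun j k => (Cᵀ * x.1) j k * (x.2.2 k)⁻¹ + ε * Real.log (x.2.1 j k),
   fun k => -((x.1ᵀ * C * x.2.1) k k) / (x.2.2 k) ^ 2 + ε * Real.log (x.2.2 k))

/-- Entrywise logarithm of a triple. -/
def logTriple {n m r : ℕ} (x : LRTriple n m r) : LRTriple n m r :=
  (Matrix.of fun i k => Real.log (x.1 i k), Matrix.of fun j k => Real.log (x.2.1 j k),
   fun k => Real.log (x.2.2 k))

/-- The feasible set Π_{a,g} × Π_{b,g}. -/
def pairFeasible {n m r : ℕ} (a : Fin n → ℝ) (b : Fin m → ℝ) (g : Fin r → ℝ) :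
    Set (LRPair n m r) :=
  {u | u.1 ∈ couplings a g ∧ u.2 ∈ couplings b g}

/-- f_ε(Q,R) = ⟨C, Q Diag(1/g) Rᵀ⟩ − ε (H(Q) + H(R)) for fixed `g`. -/
def fobj {n m r : ℕ} (C : Mat n m) (g : Fin r → ℝ) (ε : ℝ) (x : LRPair n m r) : ℝ :=
  frobInner C (x.1 * Matrix.diagonal (fun i => (g i)⁻¹) * x.2ᵀ) - ε * (matH x.1 + matH x.2)

/-- LOT_{r,g,ε} = inf of f_ε over Π_{a,g} × Π_{b,g}. -/
def LOTfix {n m r : ℕ} (a : Fin n → ℝ) (b : Fin m → ℝ) (g : Fin r → ℝ) (C : Mat n m)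
    (ε : ℝ) : ℝ :=
  sInf (fobj C g ε '' pairFeasible a b g)

/-- The gradient ∇f_ε(Q,R) = (C R Diag(1/g) + ε log Q, Cᵀ Q Diag(1/g) + ε log R). -/
def gradf {n m r : ℕ} (C : Mat n m) (g : Fin r → ℝ) (ε : ℝ) (x : LRPair n m r) :
    LRPair n m r :=
  (Matrix.of fun i k => (C * x.2) i k * (g k)⁻¹ + ε * Real.log (x.1 i k),
   Matrix.of fun j k => (Cᵀ * x.1) j k * (g k)⁻¹ + ε * Real.log (x.2 j k))

/-- Entrywise logarithm of a pair. -/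
def logPair {n m r : ℕ} (x : LRPair n m r) : LRPair n m r :=
  (Matrix.of fun i k => Real.log (x.1 i k), Matrix.of fun j k => Real.log (x.2 j k))

end


section Aux

lemma specNorm_nonneg' {n m : ℕ} (C : Mat n m) : 0 ≤ specNorm C :=
  norm_nonneg _

lemma specNorm_transpose {n m : ℕ} (C : Mat n m) :
    specNorm Cᵀ = specNorm C := by
  have h : Cᵀ = Cᴴ := by ext i j; simp [Matrix.conjTranspose_apply]
  rw [specNorm, h, Matrix.toEuclideanLin_conjTranspose_eq_adjoint,
    LinearMap.adjoint_toContinuousLinearMap]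
  exact LinearIsometryEquiv.norm_map ContinuousLinearMap.adjoint _

lemma mulVec_sq_le {n m : ℕ} (A : Mat n m) (w : Fin m → ℝ) :
    ∑ i, (A.mulVec w i) ^ 2 ≤ specNorm A ^ 2 * ∑ j, (w j) ^ 2 := by
  set v : EuclideanSpace ℝ (Fin m) := (WithLp.equiv 2 (Fin m → ℝ)).symm w
  have h1 : ∑ i, (A.mulVec w i) ^ 2 =
      ‖(LinearMap.toContinuousLinearMap (Matrix.toEuclideanLin A)) v‖ ^ 2 := by
    rw [LinearMap.coe_toContinuousLinearMap']
    rw [show (Matrix.toEuclideanLin A) v = (WithLp.equiv 2 (Fin n → ℝ)).symm (A.mulVec w) from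
      Matrix.toEuclideanLin_apply_piLp_toLp A w]
    rw [EuclideanSpace.norm_eq, Real.sq_sqrt (by positivity)]
    simp [Real.norm_eq_abs, sq_abs]
  have h2 : ∑ j, (w j) ^ 2 = ‖v‖ ^ 2 := by
    rw [EuclideanSpace.norm_eq, Real.sq_sqrt (by positivity)]
    simp [Real.norm_eq_abs, sq_abs, v]
  rw [h1, h2]
  rw [show specNorm A = ‖LinearMap.toContinuousLinearMap (Matrix.toEuclideanLin A)‖ from rfl]
  have := (LinearMap.toContinuousLinearMap (Matrix.toEuclideanLin A)).le_opNorm v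
  nlinarith [norm_nonneg ((LinearMap.toContinuousLinearMap (Matrix.toEuclideanLin A)) v),
    norm_nonneg v, norm_nonneg (LinearMap.toContinuousLinearMap (Matrix.toEuclideanLin A))]

lemma frobSq_mul_le {n m k : ℕ} (A : Mat n m) (M : Matrix (Fin m) (Fin k) ℝ) :
    ∑ i, ∑ j, ((A * M) i j) ^ 2 ≤ specNorm A ^ 2 * ∑ i, ∑ j, (M i j) ^ 2 := by
  rw [Finset.sum_comm, Finset.sum_comm (s := Finset.univ (α := Fin m))]
  rw [Finset.mul_sum]
  apply Finset.sum_le_sum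
  intro j _
  have h : ∀ i, (A * M) i j = A.mulVec (fun l => M l j) i := by
    intro i; simp [Matrix.mul_apply, Matrix.mulVec, dotProduct]
  simp only [h]
  exact mulVec_sq_le A _

lemma frobSq_diag_le {n r : ℕ} (M : Mat n r) (d : Fin r → ℝ) :
    ∑ i, ∑ k, (M i k * d k) ^ 2 ≤
      specNorm (Matrix.diagonal d) ^ 2 * ∑ i, ∑ k, (M i k) ^ 2 := by
  rw [Finset.mul_sum]
  apply Finset.sum_le_sum
  intro i _
  have h : ∀ k, M i k * d k = (Matrix.diagonal d).mulVec (M i) k := by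
    intro k; rw [Matrix.mulVec_diagonal]; ring
  simp only [h]
  exact mulVec_sq_le _ _

lemma exp_lipschitz_neg {x y : ℝ} (hx : x ≤ 0) (hy : y ≤ 0) :
    |Real.exp x - Real.exp y| ≤ |x - y| := by
  rcases le_total y x with h | h
  · have h1 : Real.exp x ≤ 1 := Real.exp_le_one_iff.mpr hx
    have h2 := Real.add_one_le_exp (y - x)
    have h3 : Real.exp y = Real.exp x * Real.exp (y - x) := by
      rw [← Real.exp_add]; ring_nf
    have h4 : Real.exp y ≤ Real.exp x := Real.exp_le_exp.mpr h
    rw [abs_of_nonneg (by linarith), abs_of_nonneg (by linarith)]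
    nlinarith [Real.exp_pos x]
  · have h1 : Real.exp y ≤ 1 := Real.exp_le_one_iff.mpr hy
    have h2 := Real.add_one_le_exp (x - y)
    have h3 : Real.exp x = Real.exp y * Real.exp (x - y) := by
      rw [← Real.exp_add]; ring_nf
    have h4 : Real.exp x ≤ Real.exp y := Real.exp_le_exp.mpr h
    rw [abs_of_nonpos (by linarith), abs_of_nonpos (by linarith)]
    nlinarith [Real.exp_pos y]

lemma sq_sub_le_sq_log_sub {p q : ℝ} (hp : 0 < p) (hp1 : p ≤ 1) (hq : 0 < q)
    (hq1 : q ≤ 1) : (p - q) ^ 2 ≤ (Real.log p - Real.log q) ^ 2 := by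
  have h := exp_lipschitz_neg (Real.log_nonpos hp.le hp1) (Real.log_nonpos hq.le hq1)
  rw [Real.exp_log hp, Real.exp_log hq] at h
  calc (p - q) ^ 2 = |p - q| ^ 2 := (sq_abs _).symm
    _ ≤ |Real.log p - Real.log q| ^ 2 := by
        apply pow_le_pow_left₀ (abs_nonneg _) h
    _ = _ := sq_abs _

end Aux

set_option maxHeartbeats 1000000 in
/-- Relative Lipschitz bound for the gradient of the fixed-marginal
objective `f_ε`: `‖∇f_ε(Q₁,R₁) − ∇f_ε(Q₂,R₂)‖₂ ≤ L_ε ‖(log Q₁ − log Q₂, log R₁ − log R₂)‖₂`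
with `L_ε = sqrt(2(‖C‖₂² ‖Diag(1/g)‖₂² + ε²))`. -/
theorem gradf_relative_lipschitz {n m r : ℕ}
    (a : Fin n → ℝ) (ha : a ∈ posSimplex n)
    (b : Fin m → ℝ) (hb : b ∈ posSimplex m)
    (g : Fin r → ℝ) (hg : g ∈ posSimplex r)
    (C : Mat n m) (ε : ℝ) (hε : 0 ≤ ε)
    (L : ℝ)
    (hL : L = Real.sqrt (2 * (specNorm C ^ 2 *
      specNorm (Matrix.diagonal fun i => (g i)⁻¹) ^ 2 + ε ^ 2)))
    (x₁ x₂ : LRPair n m r)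
    (hx₁ : x₁ ∈ pairFeasible a b g) (hx₂ : x₂ ∈ pairFeasible a b g)
    (hpos₁ : (∀ i j, 0 < x₁.1 i j) ∧ ∀ i j, 0 < x₁.2 i j)
    (hpos₂ : (∀ i j, 0 < x₂.1 i j) ∧ ∀ i j, 0 < x₂.2 i j) :
    Real.sqrt (pairNormSq (gradf C g ε x₁ - gradf C g ε x₂)) ≤
      L * Real.sqrt (pairNormSq (logPair x₁ - logPair x₂)) := by
  classical
  obtain ⟨hQ1pos, hR1pos⟩ := hpos₁
  obtain ⟨hQ2pos, hR2pos⟩ := hpos₂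
  -- entries are at most 1
  have ha1 : ∀ i, a i ≤ 1 := by
    intro i
    have := Finset.single_le_sum (f := a) (fun j _ => (ha.1 j).le) (Finset.mem_univ i)
    rw [ha.2] at this; exact this
  have hb1 : ∀ i, b i ≤ 1 := by
    intro i
    have := Finset.single_le_sum (f := b) (fun j _ => (hb.1 j).le) (Finset.mem_univ i)
    rw [hb.2] at this; exact this
  have hQle : ∀ (x : LRPair n m r), x ∈ pairFeasible a b g → ∀ i k, x.1 i k ≤ 1 := by
    intro x hx i k
    have h1 : x.1 i k ≤ ∑ j, x.1 i j :=
      Finset.single_le_sum (f := fun j => x.1 i j) (fun j _ => hx.1.1 i j)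
        (Finset.mem_univ k)
    calc x.1 i k ≤ ∑ j, x.1 i j := h1
      _ = a i := hx.1.2.1 i
      _ ≤ 1 := ha1 i
  have hRle : ∀ (x : LRPair n m r), x ∈ pairFeasible a b g → ∀ i k, x.2 i k ≤ 1 := by
    intro x hx i k
    have h1 : x.2 i k ≤ ∑ j, x.2 i j :=
      Finset.single_le_sum (f := fun j => x.2 i j) (fun j _ => hx.2.1 i j)
        (Finset.mem_univ k)
    calc x.2 i k ≤ ∑ j, x.2 i j := h1
      _ = b i := hx.2.2.1 i
      _ ≤ 1 := hb1 i
  set sC := specNorm C with hsC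
  set sD := specNorm (Matrix.diagonal fun i => (g i)⁻¹) with hsD
  set P := ∑ i, ∑ k, (Real.log (x₁.1 i k) - Real.log (x₂.1 i k)) ^ 2 with hP
  set S := ∑ i, ∑ k, (Real.log (x₁.2 i k) - Real.log (x₂.2 i k)) ^ 2 with hS
  have hPnn : 0 ≤ P := by positivity
  have hSnn : 0 ≤ S := by positivity
  have hsCnn : 0 ≤ sC := specNorm_nonneg' _
  have hsDnn : 0 ≤ sD := specNorm_nonneg' _
  -- the log-pair norm
  have hlog : pairNormSq (logPair x₁ - logPair x₂) = P + S := by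
    simp only [pairNormSq, logPair, Prod.fst_sub, Prod.snd_sub, Matrix.sub_apply,
      Matrix.of_apply, hP, hS]
  -- bounds on the differences of Q and R by log differences
  have hdQ : ∑ i, ∑ k, (x₁.1 i k - x₂.1 i k) ^ 2 ≤ P := by
    apply Finset.sum_le_sum; intro i _; apply Finset.sum_le_sum; intro k _
    exact sq_sub_le_sq_log_sub (hQ1pos i k) (hQle x₁ hx₁ i k) (hQ2pos i k)
      (hQle x₂ hx₂ i k)
  have hdR : ∑ i, ∑ k, (x₁.2 i k - x₂.2 i k) ^ 2 ≤ S := by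
    apply Finset.sum_le_sum; intro i _; apply Finset.sum_le_sum; intro k _
    exact sq_sub_le_sq_log_sub (hR1pos i k) (hRle x₁ hx₁ i k) (hR2pos i k)
      (hRle x₂ hx₂ i k)
  -- first block
  have hentry1 : ∀ i k, (gradf C g ε x₁ - gradf C g ε x₂).1 i k =
      (C * (x₁.2 - x₂.2)) i k * (g k)⁻¹ +
        ε * (Real.log (x₁.1 i k) - Real.log (x₂.1 i k)) := by
    intro i k
    simp only [gradf, Prod.fst_sub, Matrix.sub_apply, Matrix.of_apply, Matrix.mul_sub]
    ring
  have hentry2 : ∀ i k, (gradf C g ε x₁ - gradf C g ε x₂).2 i k =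
      (Cᵀ * (x₁.1 - x₂.1)) i k * (g k)⁻¹ +
        ε * (Real.log (x₁.2 i k) - Real.log (x₂.2 i k)) := by
    intro i k
    simp only [gradf, Prod.snd_sub, Matrix.sub_apply, Matrix.of_apply, Matrix.mul_sub]
    ring
  have hCR : ∑ i, ∑ k, ((C * (x₁.2 - x₂.2)) i k * (g k)⁻¹) ^ 2 ≤ sD ^ 2 * (sC ^ 2 * S) := by
    have h1 := frobSq_diag_le (C * (x₁.2 - x₂.2)) (fun i => (g i)⁻¹)
    have h2 := frobSq_mul_le C (x₁.2 - x₂.2)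
    rw [← hsD] at h1
    rw [← hsC] at h2
    calc ∑ i, ∑ k, ((C * (x₁.2 - x₂.2)) i k * (g k)⁻¹) ^ 2
        ≤ sD ^ 2 * ∑ i, ∑ k, ((C * (x₁.2 - x₂.2)) i k) ^ 2 := h1
      _ ≤ sD ^ 2 * (sC ^ 2 * ∑ i, ∑ k, ((x₁.2 - x₂.2) i k) ^ 2) :=
          mul_le_mul_of_nonneg_left h2 (sq_nonneg sD)
      _ ≤ sD ^ 2 * (sC ^ 2 * S) := by
          have h3 : ∑ i, ∑ k, ((x₁.2 - x₂.2) i k) ^ 2 ≤ S := by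
            simpa only [Matrix.sub_apply] using hdR
          exact mul_le_mul_of_nonneg_left
            (mul_le_mul_of_nonneg_left h3 (sq_nonneg sC)) (sq_nonneg sD)
  have hCQ : ∑ i, ∑ k, ((Cᵀ * (x₁.1 - x₂.1)) i k * (g k)⁻¹) ^ 2 ≤
      sD ^ 2 * (sC ^ 2 * P) := by
    have h1 := frobSq_diag_le (Cᵀ * (x₁.1 - x₂.1)) (fun i => (g i)⁻¹)
    have h2 := frobSq_mul_le Cᵀ (x₁.1 - x₂.1)
    rw [specNorm_transpose] at h2
    rw [← hsD] at h1
    rw [← hsC] at h2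
    calc ∑ i, ∑ k, ((Cᵀ * (x₁.1 - x₂.1)) i k * (g k)⁻¹) ^ 2
        ≤ sD ^ 2 * ∑ i, ∑ k, ((Cᵀ * (x₁.1 - x₂.1)) i k) ^ 2 := h1
      _ ≤ sD ^ 2 * (sC ^ 2 * ∑ i, ∑ k, ((x₁.1 - x₂.1) i k) ^ 2) :=
          mul_le_mul_of_nonneg_left h2 (sq_nonneg sD)
      _ ≤ sD ^ 2 * (sC ^ 2 * P) := by
          have h3 : ∑ i, ∑ k, ((x₁.1 - x₂.1) i k) ^ 2 ≤ P := by
            simpa only [Matrix.sub_apply] using hdQ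
          exact mul_le_mul_of_nonneg_left
            (mul_le_mul_of_nonneg_left h3 (sq_nonneg sC)) (sq_nonneg sD)
  -- pointwise (u+v)^2 ≤ 2u^2 + 2v^2 and summation
  have hblock1 : ∑ i, ∑ k, ((gradf C g ε x₁ - gradf C g ε x₂).1 i k) ^ 2 ≤
      2 * (∑ i, ∑ k, ((C * (x₁.2 - x₂.2)) i k * (g k)⁻¹) ^ 2) + 2 * ε ^ 2 * P := by
    have := Finset.sum_le_sum (s := Finset.univ (α := Fin n))
      (g := fun i => ∑ k, (2 * ((C * (x₁.2 - x₂.2)) i k * (g k)⁻¹) ^ 2 +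
        2 * ε ^ 2 * (Real.log (x₁.1 i k) - Real.log (x₂.1 i k)) ^ 2))
      (f := fun i => ∑ k, ((gradf C g ε x₁ - gradf C g ε x₂).1 i k) ^ 2) ?_
    · calc ∑ i, ∑ k, ((gradf C g ε x₁ - gradf C g ε x₂).1 i k) ^ 2 ≤ _ := this
        _ = 2 * (∑ i, ∑ k, ((C * (x₁.2 - x₂.2)) i k * (g k)⁻¹) ^ 2) + 2 * ε ^ 2 * P := by
          rw [hP]; simp only [Finset.sum_add_distrib, Finset.mul_sum]
    · intro i _
      apply Finset.sum_le_sum; intro k _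
      rw [hentry1]
      nlinarith [sq_nonneg ((C * (x₁.2 - x₂.2)) i k * (g k)⁻¹ -
        ε * (Real.log (x₁.1 i k) - Real.log (x₂.1 i k)))]
  have hblock2 : ∑ i, ∑ k, ((gradf C g ε x₁ - gradf C g ε x₂).2 i k) ^ 2 ≤
      2 * (∑ i, ∑ k, ((Cᵀ * (x₁.1 - x₂.1)) i k * (g k)⁻¹) ^ 2) + 2 * ε ^ 2 * S := by
    have := Finset.sum_le_sum (s := Finset.univ (α := Fin m))
      (g := fun i => ∑ k, (2 * ((Cᵀ * (x₁.1 - x₂.1)) i k * (g k)⁻¹) ^ 2 +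
        2 * ε ^ 2 * (Real.log (x₁.2 i k) - Real.log (x₂.2 i k)) ^ 2))
      (f := fun i => ∑ k, ((gradf C g ε x₁ - gradf C g ε x₂).2 i k) ^ 2) ?_
    · calc ∑ i, ∑ k, ((gradf C g ε x₁ - gradf C g ε x₂).2 i k) ^ 2 ≤ _ := this
        _ = 2 * (∑ i, ∑ k, ((Cᵀ * (x₁.1 - x₂.1)) i k * (g k)⁻¹) ^ 2) + 2 * ε ^ 2 * S := by
          rw [hS]; simp only [Finset.sum_add_distrib, Finset.mul_sum]
    · intro i _
      apply Finset.sum_le_sum; intro k _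
      rw [hentry2]
      nlinarith [sq_nonneg ((Cᵀ * (x₁.1 - x₂.1)) i k * (g k)⁻¹ -
        ε * (Real.log (x₁.2 i k) - Real.log (x₂.2 i k)))]
  have hmain : pairNormSq (gradf C g ε x₁ - gradf C g ε x₂) ≤
      (2 * (sC ^ 2 * sD ^ 2 + ε ^ 2)) * (P + S) := by
    rw [pairNormSq]
    nlinarith [hblock1, hblock2, hCR, hCQ, hPnn, hSnn, sq_nonneg ε]
  have hKnn : (0:ℝ) ≤ 2 * (sC ^ 2 * sD ^ 2 + ε ^ 2) := by positivity
  calc Real.sqrt (pairNormSq (gradf C g ε x₁ - gradf C g ε x₂)) ≤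
      Real.sqrt ((2 * (sC ^ 2 * sD ^ 2 + ε ^ 2)) * (P + S)) := Real.sqrt_le_sqrt hmain
    _ = Real.sqrt (2 * (sC ^ 2 * sD ^ 2 + ε ^ 2)) * Real.sqrt (P + S) :=
        Real.sqrt_mul hKnn _
    _ = L * Real.sqrt (pairNormSq (logPair x₁ - logPair x₂)) := by
        rw [hL, hlog]
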